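/- Let p > 2, b, c > 0, and let x₀, x₁, x₂ > 0 and t₀' < t₁' < t₂' be real numbers. If x₁ ≤ F_{b(t₁'-t₀')}(x₀) and x₂ ≤ F_{c(t₂'-t₁')}(x₁), then x₂ ≤ F_{d(t₂'-t₀')}(x₀), where d = min{b, c}. -/
import Mathlib

open Real

lemma key_iff (q A x y : ℝ) (hq : 0 < q) (hA : 0 ≤ A) (hx : 0 < x) (hy : 0 < y) :
    x ≤ y / (A * y ^ q + 1) ^ (1 / q) ↔ y ^ (-q) + A ≤ x ^ (-q) := by
  have hYpos : (0:ℝ) < y ^ q := rpow_pos_of_pos hy q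
  have hXpos : (0:ℝ) < x ^ q := rpow_pos_of_pos hx q
  have hzpos : (0:ℝ) < A * y ^ q + 1 := by positivity
  have hDpos : (0:ℝ) < (A * y ^ q + 1) ^ (1 / q) := rpow_pos_of_pos hzpos _
  have hDq : ((A * y ^ q + 1) ^ (1 / q)) ^ q = A * y ^ q + 1 := by
    rw [← rpow_mul hzpos.le, one_div, inv_mul_cancel₀ hq.ne', rpow_one]
  rw [le_div_iff₀ hDpos, ← Real.rpow_le_rpow_iff (by positivity) hy.le hq,
    Real.mul_rpow hx.le hDpos.le, hDq, rpow_neg hx.le, rpow_neg hy.le]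
  constructor
  · intro h
    rw [← sub_nonneg]
    have key : (x ^ q)⁻¹ - ((y ^ q)⁻¹ + A) =
        (y ^ q - x ^ q * (A * y ^ q + 1)) / (x ^ q * y ^ q) := by
      field_simp [hXpos.ne', hYpos.ne']; ring
    rw [key]
    exact div_nonneg (by linarith) (by positivity)
  · intro h
    have h' : ((y ^ q)⁻¹ + A) * (x ^ q * y ^ q) ≤ (x ^ q)⁻¹ * (x ^ q * y ^ q) :=
      mul_le_mul_of_nonneg_right h (by positivity)
    have e1 : ((y ^ q)⁻¹ + A) * (x ^ q * y ^ q) = x ^ q * (A * y ^ q + 1) := by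
      field_simp [hYpos.ne']; ring
    have e2 : (x ^ q)⁻¹ * (x ^ q * y ^ q) = y ^ q := by field_simp [hXpos.ne']
    rw [e1, e2] at h'
    exact h'

/-- Iteration lemma for `F_a(x) = x / (a x^(p-2)+1)^(1/(p-2))`. -/
theorem stmt1 (p b c x₀ x₁ x₂ t₀' t₁' t₂' : ℝ) (hp : 2 < p) (hb : 0 < b) (hc : 0 < c)
    (hx₀ : 0 < x₀) (hx₁ : 0 < x₁) (hx₂ : 0 < x₂) (h01 : t₀' < t₁') (h12 : t₁' < t₂')
    (h1 : x₁ ≤ x₀ / (b * (t₁' - t₀') * x₀ ^ (p - 2) + 1) ^ (1 / (p - 2)))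
    (h2 : x₂ ≤ x₁ / (c * (t₂' - t₁') * x₁ ^ (p - 2) + 1) ^ (1 / (p - 2))) :
    x₂ ≤ x₀ / (min b c * (t₂' - t₀') * x₀ ^ (p - 2) + 1) ^ (1 / (p - 2)) := by
  have hq : 0 < p - 2 := by linarith
  have hA1 : 0 ≤ b * (t₁' - t₀') := by nlinarith
  have hA2 : 0 ≤ c * (t₂' - t₁') := by nlinarith
  have hd : 0 ≤ min b c * (t₂' - t₀') := by
    have := lt_min hb hc
    nlinarith
  rw [key_iff _ _ _ _ hq hd hx₂ hx₀]
  rw [key_iff _ _ _ _ hq hA1 hx₁ hx₀] at h1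
  rw [key_iff _ _ _ _ hq hA2 hx₂ hx₁] at h2
  have hdb : min b c ≤ b := min_le_left _ _
  have hdc : min b c ≤ c := min_le_right _ _
  nlinarith [mul_le_mul_of_nonneg_right hdb (by linarith : (0:ℝ) ≤ t₁' - t₀'),
    mul_le_mul_of_nonneg_right hdc (by linarith : (0:ℝ) ≤ t₂' - t₁')]
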